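/- Let $g : [a,b] \to \mathbb{R}$ be differentiable with $0 < g'(y) \le 1 - A_0|y|^\alpha$ for all $y \in [a,b]$, where $A_0 > 0$ and $\alpha \in (0,1)$. Let $\varepsilon > 0$ and $\theta_\varepsilon$ be the uniform probability measure on $[-\varepsilon,\varepsilon]$. Let $J \subset [a+\varepsilon, b-\varepsilon]$ be an interval and $\widehat{J} = J \setminus [-2\varepsilon, 2\varepsilon]$. Then $\int_{-\varepsilon}^{\varepsilon} |g(J+t)| \, d\theta_\varepsilon(t) \le |J| - A_1 |\widehat{J}|^{1+\alpha}$ where $A_1 = A_0 2^{-\alpha}/(1+\alpha)$ and $|\cdot|$ denotes Lebesgue measure. -/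

import Mathlib

open MeasureTheory

lemma aux_pm (u v α : ℝ) (hu : 0 ≤ u) (hv : 0 ≤ v) (hα : 0 ≤ α) :
    (2:ℝ) ^ (-α) * (u + v) ^ (1 + α) ≤ u ^ (1 + α) + v ^ (1 + α) := by
  have hp : (1:ℝ) ≤ 1 + α := by linarith
  have h := NNReal.rpow_add_le_mul_rpow_add_rpow u.toNNReal v.toNNReal hp
  have h' : (u + v) ^ (1 + α) ≤ (2:ℝ) ^ α * (u ^ (1+α) + v ^ (1+α)) := by
    have := NNReal.coe_le_coe.mpr h
    push_cast [NNReal.coe_rpow, Real.coe_toNNReal u hu, Real.coe_toNNReal v hv] at this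
    simpa [add_sub_cancel_left] using this
  have h2 : (2:ℝ) ^ (-α) * (2:ℝ) ^ α = 1 := by
    rw [← Real.rpow_add two_pos]; simp
  calc (2:ℝ) ^ (-α) * (u + v) ^ (1 + α)
      ≤ (2:ℝ) ^ (-α) * ((2:ℝ) ^ α * (u ^ (1+α) + v ^ (1+α))) := by
        apply mul_le_mul_of_nonneg_left h' (Real.rpow_nonneg (by norm_num) _)
    _ = u ^ (1+α) + v ^ (1+α) := by rw [← mul_assoc, h2, one_mul]

lemma aux_set (c d ε : ℝ) :
    Set.Ioo c d \ Set.Icc (-(2*ε)) (2*ε)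
      = Set.Ioo c (min d (-(2*ε))) ∪ Set.Ioo (max c (2*ε)) d := by
  ext y
  simp only [Set.mem_diff, Set.mem_Ioo, Set.mem_Icc, Set.mem_union, not_and, not_le,
    lt_min_iff, max_lt_iff]
  constructor
  · rintro ⟨⟨h1, h2⟩, h3⟩
    rcases lt_or_ge y (-(2*ε)) with h4 | h4
    · exact Or.inl ⟨h1, h2, h4⟩
    · exact Or.inr ⟨⟨h1, h3 h4⟩, h2⟩
  · rintro (⟨h1, h2, h3⟩ | ⟨⟨h1, h2⟩, h3⟩)
    · exact ⟨⟨h1, h2⟩, fun h => absurd h (not_le.mpr h3)⟩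
    · exact ⟨⟨h1, h3⟩, fun _ => h2⟩

lemma aux_vol (c d ε : ℝ) (hε : 0 < ε) :
    (volume (Set.Ioo c d \ Set.Icc (-(2*ε)) (2*ε))).toReal
      = (max c (min d (-(2*ε))) - c) + (d - min d (max c (2*ε))) := by
  rw [aux_set c d ε]
  have hdisj : Disjoint (Set.Ioo c (min d (-(2*ε)))) (Set.Ioo (max c (2*ε)) d) := by
    apply Set.disjoint_left.mpr
    rintro y ⟨_, hy2⟩ ⟨hy3, _⟩
    have h1 : y < -(2*ε) := lt_of_lt_of_le hy2 (min_le_right _ _)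
    have h2 : 2*ε < y := lt_of_le_of_lt (le_max_right c _) hy3
    linarith
  rw [measure_union hdisj measurableSet_Ioo, Real.volume_Ioo, Real.volume_Ioo,
    ENNReal.toReal_add ENNReal.ofReal_ne_top ENNReal.ofReal_ne_top]
  congr 1
  · rcases le_or_gt c (min d (-(2*ε))) with h | h
    · rw [ENNReal.toReal_ofReal (by linarith), max_eq_right h]
    · rw [ENNReal.ofReal_eq_zero.mpr (by linarith), ENNReal.toReal_zero, max_eq_left h.le]
      ring
  · rcases le_or_gt (max c (2*ε)) d with h | h
    · rw [ENNReal.toReal_ofReal (by linarith), min_eq_right h]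
    · rw [ENNReal.ofReal_eq_zero.mpr (by linarith), ENNReal.toReal_zero, min_eq_left h.le]
      ring

lemma aux_lower (c d ε t α : ℝ) (hε : 0 < ε) (hα : α ∈ Set.Ioo (0:ℝ) 1)
    (hcd : c ≤ d) (ht : t ∈ Set.Icc (-ε) ε) :
    ((d - min d (max c (2*ε))) ^ (1+α) + (max c (min d (-(2*ε))) - c) ^ (1+α)) / (1+α)
      ≤ ∫ y in (c+t)..(d+t), |y| ^ α := by
  obtain ⟨hα0, hα1⟩ := hα
  set m₁ := max c (2*ε) with hm₁
  set m₂ := min d (-(2*ε)) with hm₂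
  set m₁' := min d m₁ with hm₁'
  set m₂' := max c m₂ with hm₂'
  have hm₁ε : 2*ε ≤ m₁ := le_max_right _ _
  have hm₂ε : m₂ ≤ -(2*ε) := min_le_right _ _
  have hcm₂' : c ≤ m₂' := le_max_left _ _
  have hm₁'d : m₁' ≤ d := min_le_left _ _
  have hm₂'m₁' : m₂' ≤ m₁' := by
    apply max_le
    · exact le_min hcd (le_max_left _ _)
    · exact le_min (min_le_left _ _) (by linarith)
  have hcont : Continuous fun y : ℝ => |y| ^ α :=
    continuous_abs.rpow_const (fun x => Or.inr hα0.le)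
  have hint : ∀ a' b' : ℝ, IntervalIntegrable (fun y : ℝ => |y| ^ α) volume a' b' :=
    fun a' b' => hcont.intervalIntegrable a' b'
  have hnn : ∀ y : ℝ, 0 ≤ |y| ^ α := fun y => Real.rpow_nonneg (abs_nonneg y) α
  have e2 : ∫ y in (c+t)..(d+t), |y| ^ α
      = (∫ y in (c+t)..(m₂'+t), |y| ^ α) + (∫ y in (m₂'+t)..(m₁'+t), |y| ^ α)
        + ∫ y in (m₁'+t)..(d+t), |y| ^ α := by
    rw [intervalIntegral.integral_add_adjacent_intervals (hint _ _) (hint _ _),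
      intervalIntegral.integral_add_adjacent_intervals (hint _ _) (hint _ _)]
  have hmid : 0 ≤ ∫ y in (m₂'+t)..(m₁'+t), |y| ^ α :=
    intervalIntegral.integral_nonneg (by linarith) (fun y _ => hnn y)
  have hleft : (m₂' - c) ^ (1+α) / (1+α) ≤ ∫ y in (c+t)..(m₂'+t), |y| ^ α := by
    rcases le_or_gt c m₂ with h | h
    · have hm : m₂' = m₂ := max_eq_right h
      rw [hm]
      have hcomp : ∫ y in (c+t)..(m₂+t), ((m₂+t) - y) ^ α ≤ ∫ y in (c+t)..(m₂+t), |y| ^ α := by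
        apply intervalIntegral.integral_mono_on (by linarith) ?_ (hint _ _)
        · intro y hy
          have hy2 : y ≤ m₂ + t := hy.2
          have h1 : (0:ℝ) ≤ (m₂+t) - y := by linarith
          have h2 : (m₂+t) - y ≤ |y| := by
            rw [abs_of_nonpos (by linarith [ht.2] : y ≤ 0)]
            linarith [ht.2]
          exact Real.rpow_le_rpow h1 h2 hα0.le
        · exact ((continuous_const.sub continuous_id).rpow_const
            (fun x => Or.inr hα0.le)).intervalIntegrable _ _
      have hcalc : ∫ y in (c+t)..(m₂+t), ((m₂+t) - y) ^ α = (m₂ - c) ^ (1+α) / (1+α) := by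
        rw [intervalIntegral.integral_comp_sub_left (fun x => x ^ α) (m₂+t)]
        have e0 : m₂ + t - (m₂ + t) = 0 := by ring
        have e1 : m₂ + t - (c + t) = m₂ - c := by ring
        rw [e0, e1, integral_rpow (Or.inl (by linarith)), Real.zero_rpow (by positivity)]
        ring_nf
      linarith
    · have hm : m₂' = c := max_eq_left h.le
      rw [hm]
      simp [Real.zero_rpow (show (1:ℝ)+α ≠ 0 by positivity)]
  have hright : (d - m₁') ^ (1+α) / (1+α) ≤ ∫ y in (m₁'+t)..(d+t), |y| ^ α := by
    rcases le_or_gt m₁ d with h | h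
    · have hm : m₁' = m₁ := min_eq_right h
      rw [hm]
      have hcomp : ∫ y in (m₁+t)..(d+t), (y - (m₁+t)) ^ α ≤ ∫ y in (m₁+t)..(d+t), |y| ^ α := by
        apply intervalIntegral.integral_mono_on (by linarith) ?_ (hint _ _)
        · intro y hy
          have hy1 : m₁ + t ≤ y := hy.1
          have h1 : (0:ℝ) ≤ y - (m₁+t) := by linarith
          have h2 : y - (m₁+t) ≤ |y| := by
            rw [abs_of_nonneg (by linarith [ht.1] : (0:ℝ) ≤ y)]
            linarith [ht.1]
          exact Real.rpow_le_rpow h1 h2 hα0.le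
        · exact ((continuous_id.sub continuous_const).rpow_const
            (fun x => Or.inr hα0.le)).intervalIntegrable _ _
      have hcalc : ∫ y in (m₁+t)..(d+t), (y - (m₁+t)) ^ α = (d - m₁) ^ (1+α) / (1+α) := by
        rw [intervalIntegral.integral_comp_sub_right (fun x => x ^ α) (m₁+t)]
        have e0 : m₁ + t - (m₁ + t) = 0 := by ring
        have e1 : d + t - (m₁ + t) = d - m₁ := by ring
        rw [e0, e1, integral_rpow (Or.inl (by linarith)), Real.zero_rpow (by positivity)]
        ring_nf
      linarith
    · have hm : m₁' = d := min_eq_left h.le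
      rw [hm]
      simp [Real.zero_rpow (show (1:ℝ)+α ≠ 0 by positivity)]
  rw [e2]
  have := add_div ((d - m₁') ^ (1+α)) ((m₂' - c) ^ (1+α)) (1+α)
  linarith [hleft, hright, hmid]

/-- Averaged contraction estimate (the Claim in the proof of Proposition 3.3)
for the inverse branch `g` of a map with a neutral fixed point at `0` of order
`1 + α`, under uniform additive noise of size `ε`. -/
theorem averaged_contraction (A₀ α ε a b c d : ℝ) (hA₀ : 0 < A₀)
    (hα : α ∈ Set.Ioo (0:ℝ) 1) (hε : 0 < ε) (g g' : ℝ → ℝ)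
    (hderiv : ∀ y ∈ Set.Icc a b, HasDerivAt g (g' y) y)
    (hg'pos : ∀ y ∈ Set.Icc a b, 0 < g' y)
    (hg'ub : ∀ y ∈ Set.Icc a b, g' y ≤ 1 - A₀ * |y| ^ α)
    (hJ : Set.Ioo c d ⊆ Set.Icc (a + ε) (b - ε)) :
    (2 * ε)⁻¹ * ∫ t in (-ε)..ε,
        (volume (g '' ((fun y => y + t) '' Set.Ioo c d))).toReal ≤
      (volume (Set.Ioo c d)).toReal -
        (A₀ * (2:ℝ) ^ (-α) / (1 + α)) *
          (volume (Set.Ioo c d \ Set.Icc (-(2 * ε)) (2 * ε))).toReal ^ (1 + α) := by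
  obtain ⟨hα0, hα1⟩ := hα
  have hp0 : (0:ℝ) < 1 + α := by linarith
  rcases le_or_gt d c with hdc | hcd
  · rw [Set.Ioo_eq_empty (not_lt.mpr hdc)]
    simp [Real.zero_rpow hp0.ne']
  -- main case
  have hIcc : Set.Icc c d ⊆ Set.Icc (a + ε) (b - ε) := by
    rw [← closure_Ioo hcd.ne]; exact closure_minimal hJ isClosed_Icc
  have hac : a + ε ≤ c := (hIcc ⟨le_refl c, hcd.le⟩).1
  have hdb : d ≤ b - ε := (hIcc ⟨hcd.le, le_refl d⟩).2
  set u := d - min d (max c (2*ε)) with hu_def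
  set v := max c (min d (-(2*ε))) - c with hv_def
  have hu0 : 0 ≤ u := by
    rw [hu_def]; have := min_le_left d (max c (2*ε)); linarith
  have hv0 : 0 ≤ v := by
    rw [hv_def]; have := le_max_left c (min d (-(2*ε))); linarith
  set K := (d - c) - A₀ * ((u ^ (1+α) + v ^ (1+α)) / (1+α)) with hK_def
  -- continuity of g on [a,b], monotonicity
  have hgcont : ContinuousOn g (Set.Icc a b) :=
    fun x hx => (hderiv x hx).continuousAt.continuousWithinAt
  have hgmono : MonotoneOn g (Set.Icc a b) := by
    apply monotoneOn_of_deriv_nonneg (convex_Icc a b) hgcont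
    · intro x hx
      rw [interior_Icc] at hx
      exact ((hderiv x (Set.Ioo_subset_Icc_self hx)).differentiableAt).differentiableWithinAt
    · intro x hx
      rw [interior_Icc] at hx
      rw [(hderiv x (Set.Ioo_subset_Icc_self hx)).deriv]
      exact (hg'pos x (Set.Ioo_subset_Icc_self hx)).le
  have habs_cont : Continuous fun y : ℝ => |y| ^ α :=
    continuous_abs.rpow_const (fun x => Or.inr hα0.le)
  have hφcont : Continuous fun y : ℝ => 1 - A₀ * |y| ^ α :=
    continuous_const.sub (continuous_const.mul habs_cont)
  -- key per-t estimate
  have key : ∀ t ∈ Set.Icc (-ε) ε,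
      (volume (g '' ((fun y => y + t) '' Set.Ioo c d))).toReal ≤ K := by
    intro t ht
    have h1 : a ≤ c + t := by have := ht.1; linarith
    have h2 : d + t ≤ b := by have := ht.2; linarith
    have hsub : Set.Icc (c+t) (d+t) ⊆ Set.Icc a b := Set.Icc_subset_Icc h1 h2
    rw [Set.image_add_const_Ioo]
    have hmemc : c + t ∈ Set.Icc a b := hsub ⟨le_refl _, by linarith⟩
    have hmemd : d + t ∈ Set.Icc a b := hsub ⟨by linarith, le_refl _⟩
    have himg : g '' Set.Ioo (c+t) (d+t) ⊆ Set.Icc (g (c+t)) (g (d+t)) := by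
      rintro z ⟨y, hy, rfl⟩
      have hmy : y ∈ Set.Icc a b := hsub ⟨hy.1.le, hy.2.le⟩
      exact ⟨hgmono hmemc hmy hy.1.le, hgmono hmy hmemd hy.2.le⟩
    have hgcd : g (c+t) ≤ g (d+t) := hgmono hmemc hmemd (by linarith)
    have hvol : (volume (g '' Set.Ioo (c+t) (d+t))).toReal ≤ g (d+t) - g (c+t) := by
      have hle : volume (g '' Set.Ioo (c+t) (d+t)) ≤ volume (Set.Icc (g (c+t)) (g (d+t))) := measure_mono himg
      rw [Real.volume_Icc] at hle
      have h3 := ENNReal.toReal_mono ENNReal.ofReal_ne_top hle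
      rwa [ENNReal.toReal_ofReal (sub_nonneg.mpr hgcd)] at h3
    have hftc : g (d+t) - g (c+t) ≤ ∫ y in (c+t)..(d+t), (1 - A₀ * |y| ^ α) := by
      apply intervalIntegral.sub_le_integral_of_hasDeriv_right_of_le (by linarith)
        (hgcont.mono hsub)
        (fun x hx => (hderiv x (hsub (Set.Ioo_subset_Icc_self hx))).hasDerivWithinAt)
        (hφcont.continuousOn.integrableOn_Icc)
        (fun x hx => hg'ub x (hsub (Set.Ioo_subset_Icc_self hx)))
    have hsplit : ∫ y in (c+t)..(d+t), (1 - A₀ * |y| ^ α)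
        = (d - c) - A₀ * ∫ y in (c+t)..(d+t), |y| ^ α := by
      rw [intervalIntegral.integral_sub (g := fun y => A₀ * |y| ^ α) (intervalIntegrable_const)
        ((continuous_const.mul habs_cont).intervalIntegrable _ _),
        intervalIntegral.integral_const, intervalIntegral.integral_const_mul]
      simp only [smul_eq_mul, mul_one]
      ring_nf
    have hlow := aux_lower c d ε t α hε ⟨hα0, hα1⟩ hcd.le ht
    have hA : A₀ * ((u ^ (1+α) + v ^ (1+α)) / (1+α))
        ≤ A₀ * ∫ y in (c+t)..(d+t), |y| ^ α :=
      mul_le_mul_of_nonneg_left hlow hA₀.le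
    rw [hK_def]
    calc (volume (g '' Set.Ioo (c+t) (d+t))).toReal
        ≤ g (d+t) - g (c+t) := hvol
      _ ≤ ∫ y in (c+t)..(d+t), (1 - A₀ * |y| ^ α) := hftc
      _ = (d - c) - A₀ * ∫ y in (c+t)..(d+t), |y| ^ α := hsplit
      _ ≤ (d - c) - A₀ * ((u ^ (1+α) + v ^ (1+α)) / (1+α)) := by linarith
  -- power mean: K ≤ final RHS
  have hKle : K ≤ (d - c) - (A₀ * (2:ℝ) ^ (-α) / (1 + α)) * (v + u) ^ (1+α) := by
    have hpm := aux_pm v u α hv0 hu0 hα0.le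
    rw [hK_def]
    have h1 : (A₀ * (2:ℝ) ^ (-α) / (1 + α)) * (v + u) ^ (1+α)
        = (A₀ / (1+α)) * ((2:ℝ) ^ (-α) * (v + u) ^ (1+α)) := by ring
    have h2 : A₀ * ((u ^ (1+α) + v ^ (1+α)) / (1+α))
        = (A₀ / (1+α)) * (v ^ (1+α) + u ^ (1+α)) := by ring
    rw [h1, h2]
    have h3 : (A₀ / (1+α)) * ((2:ℝ) ^ (-α) * (v + u) ^ (1+α))
        ≤ (A₀ / (1+α)) * (v ^ (1+α) + u ^ (1+α)) :=
      mul_le_mul_of_nonneg_left hpm (by positivity)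
    linarith
  -- rewrite goal
  rw [aux_vol c d ε hε, Real.volume_Ioo, ENNReal.toReal_ofReal (by linarith : (0:ℝ) ≤ d - c)]
  rw [show max c (min d (-(2*ε))) - c + (d - min d (max c (2*ε))) = v + u from rfl]
  by_cases hFi : IntervalIntegrable
      (fun t => (volume (g '' ((fun y => y + t) '' Set.Ioo c d))).toReal) volume (-ε) ε
  · have hmono := intervalIntegral.integral_mono_on (μ := volume) (by linarith : -ε ≤ ε)
      hFi (intervalIntegrable_const (c := K)) key
    rw [intervalIntegral.integral_const, smul_eq_mul] at hmono
    have hεK : (ε - -ε) * K = 2 * ε * K := by ring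
    rw [hεK] at hmono
    have hstep : (2 * ε)⁻¹ * ∫ t in (-ε)..ε,
        (volume (g '' ((fun y => y + t) '' Set.Ioo c d))).toReal ≤ (2*ε)⁻¹ * (2 * ε * K) :=
      mul_le_mul_of_nonneg_left hmono (by positivity)
    have h2ε : (2*ε)⁻¹ * (2 * ε * K) = K := by
      field_simp
    linarith
  · rw [intervalIntegral.integral_undef hFi, mul_zero]
    have hK0 : 0 ≤ K :=
      le_trans ENNReal.toReal_nonneg (key 0 ⟨by linarith, by linarith⟩)
    exact le_trans hK0 hKle
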